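/- arXiv:1508.03783 — 4 statements merged into one kernel-verified Lean document; each statement's English description precedes it below -/
import Mathlib

section
/- Let X be a Banach space and Y a normed linear space, let θ* ∈ X and r > 0, and let T: X → Y be continuously Fréchet differentiable on the closed ball B_r(θ*). Suppose ‖∇T(θ) − ∇T(θ*)‖ ≤ ε for all θ ∈ B_r(θ*), suppose ∇T(θ*) is invertible with bounded inverse, and set μ = ‖∇T(θ*)^{-1}‖. If εμ < 1 and ‖T(θ*)‖ ≤ (1 − με)r/μ, then there exists a unique θ ∈ B_r(θ*) such that T(θ) = 0, and moreover ‖θ − θ*‖ ≤ (μ/(1 − με)) ‖T(θ*)‖. -/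
set_option maxHeartbeats 1000000 in
/-- abstract existence result, Proposition 2.1.  Let `X` be a
Banach space and `Y` a normed linear space, and let `T : X → Y` be continuously
Fréchet differentiable on the closed ball `B_r(θ*)` with derivative `T'`.
If `‖T'(θ) − T'(θ*)‖ ≤ ε` on the ball, `T'(θ*)` is invertible with bounded
inverse of norm `μ`, `εμ < 1`, and `‖T(θ*)‖ ≤ (1 − με)r/μ`, then there is a
unique `θ ∈ B_r(θ*)` with `T(θ) = 0`, and
`‖θ − θ*‖ ≤ (μ/(1 − με))‖T(θ*)‖`. -/
theorem abstract_zero_existence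
    {X Y : Type*} [NormedAddCommGroup X] [NormedSpace ℝ X] [CompleteSpace X]
    [NormedAddCommGroup Y] [NormedSpace ℝ Y]
    (T : X → Y) (T' : X → X →L[ℝ] Y) (θstar : X) (r ε : ℝ) (hr : 0 < r)
    (hdiff : ∀ θ ∈ Metric.closedBall θstar r,
      HasFDerivWithinAt T (T' θ) (Metric.closedBall θstar r) θ)
    (hcont : ContinuousOn T' (Metric.closedBall θstar r))
    (hε : ∀ θ ∈ Metric.closedBall θstar r, ‖T' θ - T' θstar‖ ≤ ε)
    (E : X ≃L[ℝ] Y) (hE : (E : X →L[ℝ] Y) = T' θstar)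
    (μ : ℝ) (hμ : μ = ‖(E.symm : Y →L[ℝ] X)‖)
    (hεμ : ε * μ < 1)
    (hres : ‖T θstar‖ ≤ (1 - μ * ε) * r / μ) :
    ∃ θ ∈ Metric.closedBall θstar r,
      T θ = 0 ∧
      ‖θ - θstar‖ ≤ μ / (1 - μ * ε) * ‖T θstar‖ ∧
      ∀ θ' ∈ Metric.closedBall θstar r, T θ' = 0 → θ' = θ := by
  set s := Metric.closedBall θstar r with hs
  have hstar : θstar ∈ s := Metric.mem_closedBall_self hr.le
  have hε0 : 0 ≤ ε := le_trans (norm_nonneg _) (hε θstar hstar)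
  have hμ0 : 0 ≤ μ := hμ ▸ norm_nonneg _
  have hpos : 0 < 1 - μ * ε := by nlinarith
  set Φ : X → X := fun θ => θ - E.symm (T θ) with hΦ
  -- the Newton-type map is a contraction on `s`
  have hsymm : ∀ y : Y, ‖E.symm y‖ ≤ μ * ‖y‖ := by
    intro y; rw [hμ]; exact (E.symm : Y →L[ℝ] X).le_opNorm y
  have hmvt : ∀ θ₁ ∈ s, ∀ θ₂ ∈ s,
      ‖T θ₁ - T θ₂ - T' θstar (θ₁ - θ₂)‖ ≤ ε * ‖θ₁ - θ₂‖ := by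
    intro θ₁ h1 θ₂ h2
    exact (convex_closedBall θstar r).norm_image_sub_le_of_norm_hasFDerivWithin_le'
      hdiff hε h2 h1
  have hcontr : ∀ θ₁ ∈ s, ∀ θ₂ ∈ s, ‖Φ θ₁ - Φ θ₂‖ ≤ ε * μ * ‖θ₁ - θ₂‖ := by
    intro θ₁ h1 θ₂ h2
    have key : Φ θ₁ - Φ θ₂ = -(E.symm (T θ₁ - T θ₂ - T' θstar (θ₁ - θ₂))) := by
      have hid : ∀ v : X, E.symm (T' θstar v) = v := fun v => by
        rw [← hE]; exact E.symm_apply_apply _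
      simp only [hΦ, map_sub, hid]
      abel
    rw [key, norm_neg]
    calc ‖E.symm (T θ₁ - T θ₂ - T' θstar (θ₁ - θ₂))‖
        ≤ μ * ‖T θ₁ - T θ₂ - T' θstar (θ₁ - θ₂)‖ := hsymm _
      _ ≤ μ * (ε * ‖θ₁ - θ₂‖) := by
          exact mul_le_mul_of_nonneg_left (hmvt θ₁ h1 θ₂ h2) hμ0
      _ = ε * μ * ‖θ₁ - θ₂‖ := by ring
  have hΦstar : ‖Φ θstar - θstar‖ ≤ μ * ‖T θstar‖ := by
    have : Φ θstar - θstar = -(E.symm (T θstar)) := by simp [hΦ]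
    rw [this, norm_neg]; exact hsymm _
  have hμT : μ * ‖T θstar‖ ≤ (1 - μ * ε) * r := by
    rcases eq_or_lt_of_le hμ0 with h0 | h0
    · rw [← h0]; nlinarith
    · rw [le_div_iff₀ h0] at hres; linarith [mul_comm μ ‖T θstar‖ ▸ hres]
  have hmaps : ∀ θ ∈ s, Φ θ ∈ s := by
    intro θ hθ
    rw [hs, Metric.mem_closedBall]
    have hθr : ‖θ - θstar‖ ≤ r := by
      rw [← dist_eq_norm]; exact hθ
    calc dist (Φ θ) θstar ≤ dist (Φ θ) (Φ θstar) + dist (Φ θstar) θstar := dist_triangle _ _ _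
      _ = ‖Φ θ - Φ θstar‖ + ‖Φ θstar - θstar‖ := by rw [dist_eq_norm, dist_eq_norm]
      _ ≤ ε * μ * ‖θ - θstar‖ + μ * ‖T θstar‖ := add_le_add (hcontr θ hθ θstar hstar) hΦstar
      _ ≤ ε * μ * r + (1 - μ * ε) * r := by
          refine add_le_add ?_ hμT
          exact mul_le_mul_of_nonneg_left hθr (by positivity)
      _ = r := by ring
  -- set up the contraction on the subtype
  haveI : CompleteSpace s := (Metric.isClosed_closedBall (x := θstar) (ε := r)).completeSpace_coe
  haveI : Nonempty s := ⟨⟨θstar, hstar⟩⟩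
  set f : s → s := fun x => ⟨Φ x, hmaps x x.2⟩ with hf
  have hεμ0 : (0:ℝ) ≤ ε * μ := mul_nonneg hε0 hμ0
  set K : NNReal := ⟨ε * μ, hεμ0⟩ with hK
  have hcontracting : ContractingWith K f := by
    constructor
    · exact_mod_cast hεμ
    · apply LipschitzWith.of_dist_le_mul
      intro x y
      have := hcontr x x.2 y y.2
      simpa [hf, show (K : ℝ) = ε * μ from rfl, Subtype.dist_eq, dist_eq_norm] using this
  obtain ⟨θ₀, hfix⟩ : ∃ x : s, f x = x :=
    ⟨hcontracting.fixedPoint f, hcontracting.fixedPoint_isFixedPt⟩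
  have hfixΦ : Φ (θ₀ : X) = (θ₀ : X) := congrArg Subtype.val hfix
  have hT0 : T (θ₀ : X) = 0 := by
    have h1 : E.symm (T (θ₀ : X)) = 0 := by
      have := hfixΦ
      simp only [hΦ, sub_eq_self] at this
      exact this
    have := congrArg E h1
    simpa using this
  refine ⟨θ₀, θ₀.2, hT0, ?_, ?_⟩
  · -- the quantitative bound
    have h1 : ‖(θ₀:X) - θstar‖ ≤ ε * μ * ‖(θ₀:X) - θstar‖ + μ * ‖T θstar‖ := by
      calc ‖(θ₀:X) - θstar‖ = ‖Φ (θ₀:X) - θstar‖ := by rw [hfixΦ]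
        _ ≤ ‖Φ (θ₀:X) - Φ θstar‖ + ‖Φ θstar - θstar‖ := norm_sub_le_norm_sub_add_norm_sub _ _ _
        _ ≤ ε * μ * ‖(θ₀:X) - θstar‖ + μ * ‖T θstar‖ :=
            add_le_add (hcontr _ θ₀.2 θstar hstar) hΦstar
    rw [div_mul_eq_mul_div, le_div_iff₀ hpos]
    nlinarith
  · intro θ' hθ' hT'
    have hfix' : Φ θ' = θ' := by simp [hΦ, hT']
    have h2 : ‖θ' - (θ₀:X)‖ ≤ ε * μ * ‖θ' - (θ₀:X)‖ := by
      calc ‖θ' - (θ₀:X)‖ = ‖Φ θ' - Φ (θ₀:X)‖ := by rw [hfix', hfixΦ]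
        _ ≤ ε * μ * ‖θ' - (θ₀:X)‖ := hcontr θ' hθ' _ θ₀.2
    have : ‖θ' - (θ₀:X)‖ = 0 := by nlinarith [norm_nonneg (θ' - (θ₀:X))]
    exact sub_eq_zero.mp (norm_eq_zero.mp this)
end

section
/- Let τ_0 = -1 < τ_1 < … < τ_N be distinct nodes with differentiation matrix D, suppose D_{1:N} is invertible with ‖D_{1:N}^{-1}‖_∞ ≤ 2, and let A_1,…,A_N ∈ ℝ^{n×n} satisfy ‖A_i‖_∞ ≤ 1/4 for all i. Then for every q ∈ ℝ^n and every p = (p_1,…,p_N) with p_i ∈ ℝ^n, the linear system Σ_{j=0}^{N} D_{ij} X_j − A_i X_i = p_i (1 ≤ i ≤ N), X_0 = q, has a unique solution X_0, X_1, …, X_N ∈ ℝ^n, and this solution satisfies ‖X_j‖_∞ ≤ 4‖p‖_∞ + 2‖q‖_∞ for 0 ≤ j ≤ N, where ‖·‖_∞ denotes the maximum absolute entry of a vector. -/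
open Polynomial Matrix

noncomputable section

/-- The differentiation matrix associated with nodes `σ 0, σ 1, …, σ N`
(`σ 0` being the non-collocated point):  `D i j = L̇_j(σ (i+1))`,
where `L_j` is the `j`-th Lagrange basis polynomial of the nodes. -/
def diffMat (N : ℕ) (σ : Fin (N + 1) → ℝ) : Matrix (Fin N) (Fin (N + 1)) ℝ :=
  fun i j => (derivative (Lagrange.basis Finset.univ σ j)).eval (σ i.succ)

/-- The square submatrix of `D` formed by columns `1` through `N`. -/
def diffMat1N (N : ℕ) (σ : Fin (N + 1) → ℝ) : Matrix (Fin N) (Fin N) ℝ :=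
  fun i j => diffMat N σ i j.succ

lemma diffMat_rowsum (N : ℕ) (σ : Fin (N + 1) → ℝ) (hinj : Function.Injective σ)
    (i : Fin N) : ∑ j, diffMat N σ i j = 0 := by
  have h1 : ∑ j, Lagrange.basis Finset.univ σ j = 1 :=
    Lagrange.sum_basis (Function.Injective.injOn hinj) Finset.univ_nonempty
  have h2 : ∑ j, diffMat N σ i j
      = (derivative (∑ j, Lagrange.basis Finset.univ σ j)).eval (σ i.succ) := by
    simp [diffMat, derivative_sum, eval_finset_sum]
  rw [h2, h1]
  simp

lemma bound_aux (N n : ℕ) (hN : 1 ≤ N) (σ : Fin (N + 1) → ℝ)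
    (hinj : Function.Injective σ)
    (hD : IsUnit (diffMat1N N σ))
    (hDnorm : ∀ i : Fin N, ∑ j, |(diffMat1N N σ)⁻¹ i j| ≤ 2)
    (A : Fin N → Matrix (Fin n) (Fin n) ℝ)
    (hA : ∀ (i : Fin N) (k : Fin n), ∑ l, |A i k l| ≤ 1 / 4)
    (q : Fin n → ℝ) (p : Fin N → Fin n → ℝ)
    (X : Fin (N + 1) → Fin n → ℝ)
    (hX : ∀ i : Fin N, (∑ j, diffMat N σ i j • X j) - (A i).mulVec (X i.succ) = p i)
    (hX0 : X 0 = q) :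
    ∀ (j : Fin (N + 1)) (k : Fin n),
      |X j k| ≤ 4 * (⨆ i, ⨆ l, |p i l|) + 2 * ⨆ l, |q l| := by
  intro j k
  have hn : Nonempty (Fin n) := ⟨k⟩
  set Dinv := (diffMat1N N σ)⁻¹ with hDinvdef
  have hmul : Dinv * diffMat1N N σ = 1 :=
    Matrix.nonsing_inv_mul _ ((Matrix.isUnit_iff_isUnit_det _).mp hD)
  have heq : ∀ (i : Fin N) (l : Fin n),
      (diffMat1N N σ).mulVec (fun m => X m.succ l) i
        = (p i l + (A i).mulVec (X i.succ) l) - diffMat N σ i 0 * q l := by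
    intro i l
    have h := congrFun (hX i) l
    simp only [Pi.sub_apply, Finset.sum_apply, Pi.smul_apply, smul_eq_mul] at h
    rw [Fin.sum_univ_succ] at h
    simp only [Matrix.mulVec, dotProduct, hX0] at h
    simp only [Matrix.mulVec, dotProduct, diffMat1N, hX0]
    linarith [h]
  have key : ∀ (i : Fin N) (l : Fin n),
      X i.succ l = (∑ m, Dinv i m * (p m l + (A m).mulVec (X m.succ) l)) + q l := by
    intro i l
    have hv : (fun m => X m.succ l)
        = Dinv.mulVec ((diffMat1N N σ).mulVec (fun m => X m.succ l)) := by
      rw [Matrix.mulVec_mulVec, hmul, Matrix.one_mulVec]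
    have hw1 : (fun m => diffMat N σ m 0 * q l)
        = (diffMat1N N σ).mulVec (fun _ => - q l) := by
      funext m
      have hr := diffMat_rowsum N σ hinj m
      rw [Fin.sum_univ_succ] at hr
      have hD0 : diffMat N σ m 0 = - ∑ r : Fin N, diffMat N σ m r.succ := by linarith
      simp only [Matrix.mulVec, dotProduct, diffMat1N, hD0]
      rw [neg_mul, Finset.sum_mul]
      simp [mul_comm]
    have hw : Dinv.mulVec (fun m => diffMat N σ m 0 * q l) = fun _ => - q l := by
      rw [hw1, Matrix.mulVec_mulVec, hmul, Matrix.one_mulVec]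
    have h1 : (diffMat1N N σ).mulVec (fun m => X m.succ l)
        = (fun m => p m l + (A m).mulVec (X m.succ) l)
          - (fun m => diffMat N σ m 0 * q l) := by
      funext m; exact heq m l
    have h2 := congrFun hv i
    rw [h1, Matrix.mulVec_sub, hw] at h2
    simp only [Pi.sub_apply] at h2
    rw [h2]
    simp [Matrix.mulVec, dotProduct]
  set P := ⨆ i, ⨆ l, |p i l| with hPdef
  set Q := ⨆ l, |q l| with hQdef
  have hPle : ∀ (i : Fin N) (l : Fin n), |p i l| ≤ P := by
    intro i l
    refine le_trans (le_ciSup (f := fun l => |p i l|)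
      (Set.Finite.bddAbove (Set.finite_range _)) l) ?_
    exact le_ciSup (f := fun i => ⨆ l, |p i l|)
      (Set.Finite.bddAbove (Set.finite_range _)) i
  have hQle : ∀ l, |q l| ≤ Q := fun l =>
    le_ciSup (f := fun l => |q l|) (Set.Finite.bddAbove (Set.finite_range _)) l
  have hP0 : 0 ≤ P := le_trans (abs_nonneg _) (hPle ⟨0, hN⟩ k)
  have hQ0 : 0 ≤ Q := le_trans (abs_nonneg _) (hQle k)
  set B := ⨆ jk : Fin (N + 1) × Fin n, |X jk.1 jk.2| with hBdef
  have hBle : ∀ j' k', |X j' k'| ≤ B := fun j' k' =>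
    le_ciSup (f := fun jk : Fin (N + 1) × Fin n => |X jk.1 jk.2|)
      (Set.Finite.bddAbove (Set.finite_range _)) (j', k')
  have hB0 : 0 ≤ B := le_trans (abs_nonneg _) (hBle 0 k)
  have hu : ∀ (m : Fin N) (l : Fin n),
      |p m l + (A m).mulVec (X m.succ) l| ≤ P + (1 / 4) * B := by
    intro m l
    have h1 : |(A m).mulVec (X m.succ) l| ≤ (1 / 4) * B := by
      calc |(A m).mulVec (X m.succ) l| ≤ ∑ r, |A m l r * X m.succ r| := by
            simp only [Matrix.mulVec, dotProduct]
            exact Finset.abs_sum_le_sum_abs _ _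
        _ ≤ ∑ r, |A m l r| * B := by
            apply Finset.sum_le_sum; intro r _
            rw [abs_mul]
            exact mul_le_mul_of_nonneg_left (hBle _ _) (abs_nonneg _)
        _ = (∑ r, |A m l r|) * B := by rw [Finset.sum_mul]
        _ ≤ (1 / 4) * B := mul_le_mul_of_nonneg_right (hA m l) hB0
    calc |p m l + (A m).mulVec (X m.succ) l|
        ≤ |p m l| + |(A m).mulVec (X m.succ) l| := abs_add_le _ _
      _ ≤ P + (1 / 4) * B := add_le_add (hPle m l) h1
  have hXsucc : ∀ (i : Fin N) (l : Fin n), |X i.succ l| ≤ 2 * P + B / 2 + Q := by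
    intro i l
    rw [key i l]
    have h1 : |∑ m, Dinv i m * (p m l + (A m).mulVec (X m.succ) l)|
        ≤ 2 * (P + (1 / 4) * B) := by
      calc |∑ m, Dinv i m * (p m l + (A m).mulVec (X m.succ) l)|
          ≤ ∑ m, |Dinv i m * (p m l + (A m).mulVec (X m.succ) l)| :=
            Finset.abs_sum_le_sum_abs _ _
        _ ≤ ∑ m, |Dinv i m| * (P + (1 / 4) * B) := by
            apply Finset.sum_le_sum; intro m _
            rw [abs_mul]
            exact mul_le_mul_of_nonneg_left (hu m l) (abs_nonneg _)
        _ = (∑ m, |Dinv i m|) * (P + (1 / 4) * B) := by rw [Finset.sum_mul]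
        _ ≤ 2 * (P + (1 / 4) * B) := by
            apply mul_le_mul_of_nonneg_right (hDnorm i)
            linarith
    calc |(∑ m, Dinv i m * (p m l + (A m).mulVec (X m.succ) l)) + q l|
        ≤ |∑ m, Dinv i m * (p m l + (A m).mulVec (X m.succ) l)| + |q l| := abs_add_le _ _
      _ ≤ 2 * (P + (1 / 4) * B) + Q := add_le_add h1 (hQle l)
      _ = 2 * P + B / 2 + Q := by ring
  have hBbound : B ≤ 2 * P + B / 2 + Q := by
    apply ciSup_le
    rintro ⟨j', k'⟩
    induction j' using Fin.cases with
    | zero =>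
        rw [hX0]
        have := hQle k'
        linarith
    | succ i => exact hXsucc i k'
  exact le_trans (hBle j k) (by linarith)

def bigM (N n : ℕ) (σ : Fin (N + 1) → ℝ) (A : Fin N → Matrix (Fin n) (Fin n) ℝ) :
    Matrix (Fin N × Fin n) (Fin N × Fin n) ℝ :=
  fun ik jm => diffMat1N N σ ik.1 jm.1 * (if ik.2 = jm.2 then 1 else 0)
    - (if ik.1 = jm.1 then A ik.1 ik.2 jm.2 else 0)

lemma bigM_mulVec (N n : ℕ) (σ : Fin (N + 1) → ℝ)
    (A : Fin N → Matrix (Fin n) (Fin n) ℝ)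
    (Y : Fin N × Fin n → ℝ) (i : Fin N) (k : Fin n) :
    (bigM N n σ A).mulVec Y (i, k)
      = (∑ j, diffMat1N N σ i j * Y (j, k)) - ∑ m, A i k m * Y (i, m) := by
  simp only [bigM, Matrix.mulVec, dotProduct, Fintype.sum_prod_type, sub_mul,
    mul_ite, ite_mul, mul_one, mul_zero, zero_mul, one_mul, Finset.sum_sub_distrib,
    Finset.sum_ite_eq, Finset.sum_ite_eq', Finset.mem_univ, if_true]
  rw [Finset.sum_comm]
  simp [Finset.sum_ite_eq]

/-- If `Y` solves the reduced square system, then the extension solves the full one. -/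
lemma extend_solution (N n : ℕ) (σ : Fin (N + 1) → ℝ)
    (A : Fin N → Matrix (Fin n) (Fin n) ℝ)
    (q : Fin n → ℝ) (p : Fin N → Fin n → ℝ) (Y : Fin N × Fin n → ℝ)
    (hY : (bigM N n σ A).mulVec Y
      = fun ik => p ik.1 ik.2 - diffMat N σ ik.1 0 * q ik.2) (i : Fin N) :
    (∑ j, diffMat N σ i j • (Fin.cases q (fun j' m => Y (j', m)) : Fin (N + 1) → Fin n → ℝ) j)
      - (A i).mulVec ((Fin.cases q (fun j' m => Y (j', m)) : Fin (N + 1) → Fin n → ℝ) i.succ)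
      = p i := by
  funext k
  have h := congrFun hY (i, k)
  rw [bigM_mulVec] at h
  simp only [Pi.sub_apply, Finset.sum_apply, Pi.smul_apply, smul_eq_mul]
  rw [Fin.sum_univ_succ]
  simp only [Fin.cases_zero, Fin.cases_succ, Matrix.mulVec, dotProduct, diffMat1N] at *
  linarith [h]

/-- Let `τ_0 = -1 < τ_1 < … < τ_N` be nodes whose
differentiation matrix satisfies: `D_{1:N}` invertible with
`‖D_{1:N}⁻¹‖_∞ ≤ 2` (maximum absolute row sum), and let `A_i` be `n×n`
matrices with `‖A_i‖_∞ ≤ 1/4`.  Then for every `q ∈ ℝ^n` and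
`p = (p_1,…,p_N)` the system `∑_j D_{ij}X_j − A_iX_i = p_i`, `X_0 = q`
has a unique solution, and every entry of the solution satisfies
`|X_j^k| ≤ 4‖p‖_∞ + 2‖q‖_∞` (max absolute entry norms). -/
theorem discrete_state_system_unique_solution
    (N n : ℕ) (hN : 1 ≤ N) (σ : Fin (N + 1) → ℝ)
    (hmono : StrictMono σ) (hfirst : σ 0 = -1)
    (hD : IsUnit (diffMat1N N σ))
    (hDnorm : ∀ i : Fin N, ∑ j, |(diffMat1N N σ)⁻¹ i j| ≤ 2)
    (A : Fin N → Matrix (Fin n) (Fin n) ℝ)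
    (hA : ∀ (i : Fin N) (k : Fin n), ∑ l, |A i k l| ≤ 1 / 4)
    (q : Fin n → ℝ) (p : Fin N → Fin n → ℝ) :
    (∃! X : Fin (N + 1) → Fin n → ℝ,
      (∀ i : Fin N,
        (∑ j, diffMat N σ i j • X j) - (A i).mulVec (X i.succ) = p i) ∧
      X 0 = q) ∧
    (∀ X : Fin (N + 1) → Fin n → ℝ,
      ((∀ i : Fin N,
          (∑ j, diffMat N σ i j • X j) - (A i).mulVec (X i.succ) = p i) ∧
        X 0 = q) →
      ∀ (j : Fin (N + 1)) (k : Fin n),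
        |X j k| ≤ 4 * (⨆ i, ⨆ l, |p i l|) + 2 * ⨆ l, |q l|) := by
  have hinj : Function.Injective σ := hmono.injective
  -- zero sups
  have hsupP : (⨆ i, ⨆ l, |(0 : Fin N → Fin n → ℝ) i l|) ≤ 0 :=
    Real.iSup_le (fun i => Real.iSup_le (fun l => by simp) le_rfl) le_rfl
  have hsupQ : (⨆ l, |(0 : Fin n → ℝ) l|) ≤ 0 :=
    Real.iSup_le (fun l => by simp) le_rfl
  -- uniqueness of solutions
  have huniq : ∀ X₁ X₂ : Fin (N + 1) → Fin n → ℝ,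
      ((∀ i : Fin N,
          (∑ j, diffMat N σ i j • X₁ j) - (A i).mulVec (X₁ i.succ) = p i) ∧ X₁ 0 = q) →
      ((∀ i : Fin N,
          (∑ j, diffMat N σ i j • X₂ j) - (A i).mulVec (X₂ i.succ) = p i) ∧ X₂ 0 = q) →
      X₁ = X₂ := by
    intro X₁ X₂ h₁ h₂
    have hZ : ∀ i : Fin N,
        (∑ j, diffMat N σ i j • (X₁ - X₂) j) - (A i).mulVec ((X₁ - X₂) i.succ)
          = (0 : Fin N → Fin n → ℝ) i := by
      intro i
      have e1 := h₁.1 i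
      have e2 := h₂.1 i
      simp only [Pi.sub_apply, smul_sub, Finset.sum_sub_distrib, Matrix.mulVec_sub,
        Pi.zero_apply]
      rw [sub_sub_sub_comm, e1, e2, sub_self]
    have hZ0 : (X₁ - X₂) 0 = 0 := by
      simp [Pi.sub_apply, h₁.2, h₂.2]
    have hb := bound_aux N n hN σ hinj hD hDnorm A hA 0 0 (X₁ - X₂) hZ hZ0
    funext j kk
    have h3 := hb j kk
    have h4 : |(X₁ - X₂) j kk| ≤ 0 := by
      refine h3.trans ?_
      linarith
    have h5 : (X₁ - X₂) j kk = 0 := by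
      have := abs_nonneg ((X₁ - X₂) j kk)
      have := abs_eq_zero.mp (le_antisymm h4 this)
      exact this
    simpa [sub_eq_zero] using h5
  -- injectivity of the reduced system
  have hinjM : Function.Injective (Matrix.mulVecLin (bigM N n σ A)) := by
    rw [injective_iff_map_eq_zero]
    intro Y hY0
    have hY0' : (bigM N n σ A).mulVec Y
        = fun ik => (0 : Fin N → Fin n → ℝ) ik.1 ik.2
            - diffMat N σ ik.1 0 * (0 : Fin n → ℝ) ik.2 := by
      funext ik
      have := congrFun hY0 ik
      simpa [Matrix.mulVecLin_apply] using this
    have hXeq := fun i => extend_solution N n σ A 0 0 Y hY0' i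
    have hb := bound_aux N n hN σ hinj hD hDnorm A hA 0 0
      (Fin.cases 0 (fun j' m => Y (j', m))) hXeq (by simp)
    funext jm
    obtain ⟨j, m⟩ := jm
    have h3 := hb j.succ m
    simp only [Fin.cases_succ] at h3
    have h4 : |Y (j, m)| ≤ 0 := by
      refine h3.trans ?_
      linarith
    have := abs_nonneg (Y (j, m))
    exact abs_eq_zero.mp (le_antisymm h4 this)
  -- existence
  obtain ⟨Y, hY⟩ := LinearMap.injective_iff_surjective.mp hinjM
    (fun ik => p ik.1 ik.2 - diffMat N σ ik.1 0 * q ik.2)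
  have hY' : (bigM N n σ A).mulVec Y
      = fun ik => p ik.1 ik.2 - diffMat N σ ik.1 0 * q ik.2 := by
    funext ik
    have := congrFun hY ik
    simpa [Matrix.mulVecLin_apply] using this
  set X : Fin (N + 1) → Fin n → ℝ := Fin.cases q (fun j' m => Y (j', m)) with hXdef
  have hXsol : (∀ i : Fin N,
      (∑ j, diffMat N σ i j • X j) - (A i).mulVec (X i.succ) = p i) ∧ X 0 = q :=
    ⟨fun i => extend_solution N n σ A q p Y hY' i, by simp [hXdef]⟩
  refine ⟨⟨X, hXsol, fun X' hX' => huniq X' X hX' hXsol⟩, ?_⟩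
  intro X' hX'
  exact bound_aux N n hN σ hinj hD hDnorm A hA q p X' hX'.1 hX'.2
end
end

section
/- Suppose (x*, u*) is a local minimizer of the continuous optimal control problem (P) with costate λ*, assumptions (A2)–(A3) hold, and the Radau quadrature rule of order N satisfies (P1). Then the linear map ∇T* is invertible. -/
open Polynomial Matrix Set

noncomputable section

/-- Euclidean norm of a finite real vector. -/
def enorm' {k : ℕ} (v : Fin k → ℝ) : ℝ := Real.sqrt (∑ i, (v i) ^ 2)

/-- Gradient of a scalar function on `ℝ^k` (vector of partial derivatives). -/
def pgrad {k : ℕ} (g : (Fin k → ℝ) → ℝ) (x : Fin k → ℝ) : Fin k → ℝ :=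
  fun i => fderiv ℝ g x (Pi.single i 1)

/-- The Hamiltonian `H(x,u,λ) = λᵀ f(x,u)`. -/
def ham {n m : ℕ} (f : (Fin n → ℝ) → (Fin m → ℝ) → Fin n → ℝ)
    (x : Fin n → ℝ) (u : Fin m → ℝ) (lam : Fin n → ℝ) : ℝ :=
  ∑ l, lam l * f x u l

/-- `∇_x H`. -/
def gradxH {n m : ℕ} (f : (Fin n → ℝ) → (Fin m → ℝ) → Fin n → ℝ)
    (x : Fin n → ℝ) (u : Fin m → ℝ) (lam : Fin n → ℝ) : Fin n → ℝ :=
  pgrad (fun x' => ham f x' u lam) x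

/-- `∇_u H`. -/
def graduH {n m : ℕ} (f : (Fin n → ℝ) → (Fin m → ℝ) → Fin n → ℝ)
    (x : Fin n → ℝ) (u : Fin m → ℝ) (lam : Fin n → ℝ) : Fin m → ℝ :=
  pgrad (fun u' => ham f x u' lam) u

/-- Jacobian `∇_x f` (an `n×n` matrix whose `k`-th row is `(∇_x f_k)ᵀ`). -/
def jacX {n m : ℕ} (f : (Fin n → ℝ) → (Fin m → ℝ) → Fin n → ℝ)
    (x : Fin n → ℝ) (u : Fin m → ℝ) : Matrix (Fin n) (Fin n) ℝ :=
  fun k l => fderiv ℝ (fun x' => f x' u k) x (Pi.single l 1)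

/-- Jacobian `∇_u f`. -/
def jacU {n m : ℕ} (f : (Fin n → ℝ) → (Fin m → ℝ) → Fin n → ℝ)
    (x : Fin n → ℝ) (u : Fin m → ℝ) : Matrix (Fin n) (Fin m) ℝ :=
  fun k l => fderiv ℝ (fun u' => f x u' k) u (Pi.single l 1)

/-- Hessian `∇_{xx} H`. -/
def hessXX {n m : ℕ} (f : (Fin n → ℝ) → (Fin m → ℝ) → Fin n → ℝ)
    (x : Fin n → ℝ) (u : Fin m → ℝ) (lam : Fin n → ℝ) : Matrix (Fin n) (Fin n) ℝ :=
  fun k l => fderiv ℝ (fun x' => gradxH f x' u lam l) x (Pi.single k 1)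

/-- Hessian `∇_{xu} H` (`n×m`). -/
def hessXU {n m : ℕ} (f : (Fin n → ℝ) → (Fin m → ℝ) → Fin n → ℝ)
    (x : Fin n → ℝ) (u : Fin m → ℝ) (lam : Fin n → ℝ) : Matrix (Fin n) (Fin m) ℝ :=
  fun k l => fderiv ℝ (fun u' => gradxH f x u' lam k) u (Pi.single l 1)

/-- Hessian `∇_{uu} H`. -/
def hessUU {n m : ℕ} (f : (Fin n → ℝ) → (Fin m → ℝ) → Fin n → ℝ)
    (x : Fin n → ℝ) (u : Fin m → ℝ) (lam : Fin n → ℝ) : Matrix (Fin m) (Fin m) ℝ :=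
  fun k l => fderiv ℝ (fun u' => graduH f x u' lam k) u (Pi.single l 1)

/-- Hessian `∇² C`. -/
def hessC {n : ℕ} (C : (Fin n → ℝ) → ℝ) (x : Fin n → ℝ) : Matrix (Fin n) (Fin n) ℝ :=
  fun k l => fderiv ℝ (fun x' => pgrad C x' l) x (Pi.single k 1)

/-- The matrix `D‡` with entries `D‡_{ij} = -(ω_j/ω_i) D_{ji}`. -/
def ddagMat (N : ℕ) (σ : Fin (N + 1) → ℝ) (ω : Fin N → ℝ) :
    Matrix (Fin N) (Fin N) ℝ :=
  fun i j => -(ω j / ω i) * diffMat N σ j i.succ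

/-- `(τ; ω)` is a Radau quadrature rule of order `N`: nodes
`-1 < τ_1 < … < τ_N = 1`, positive weights, and the quadrature is exact for
polynomials of degree at most `2N-2`. -/
def IsRadauRule (N : ℕ) (τ ω : Fin N → ℝ) : Prop :=
  StrictMono τ ∧ (∀ i, -1 < τ i) ∧ (∀ i, τ i ≤ 1) ∧ (∃ i, τ i = 1) ∧
  (∀ i, 0 < ω i) ∧
  ∀ q : Polynomial ℝ, q.degree ≤ (2 * N - 2 : ℕ) →
    ∫ t in (-1:ℝ)..1, q.eval t = ∑ i, ω i * q.eval (τ i)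

/-- The linearized KKT map `∇T*` of the Radau discretization, linearized at
`(x*, u*, λ*)` evaluated along the collocation points. -/
def gradTstar (n m N : ℕ) (hN : 0 < N)
    (f : (Fin n → ℝ) → (Fin m → ℝ) → Fin n → ℝ) (C : (Fin n → ℝ) → ℝ)
    (xs : ℝ → Fin n → ℝ) (us : ℝ → Fin m → ℝ) (lams : ℝ → Fin n → ℝ)
    (τ ω : Fin N → ℝ) :
    ((Fin (N + 1) → Fin n → ℝ) × (Fin N → Fin m → ℝ) × (Fin (N + 1) → Fin n → ℝ)) →
    ((Fin N → Fin n → ℝ) × (Fin n → ℝ) × (Fin n → ℝ) ×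
      (Fin (N - 1) → Fin n → ℝ) × (Fin n → ℝ) × (Fin N → Fin m → ℝ)) :=
  fun XUL =>
    let X := XUL.1; let U := XUL.2.1; let Λ := XUL.2.2
    let σ : Fin (N + 1) → ℝ := Fin.cons (-1) τ
    let A : Fin N → Matrix (Fin n) (Fin n) ℝ := fun i => jacX f (xs (τ i)) (us (τ i))
    let B : Fin N → Matrix (Fin n) (Fin m) ℝ := fun i => jacU f (xs (τ i)) (us (τ i))
    let Q : Fin N → Matrix (Fin n) (Fin n) ℝ :=
      fun i => hessXX f (xs (τ i)) (us (τ i)) (lams (τ i))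
    let S : Fin N → Matrix (Fin n) (Fin m) ℝ :=
      fun i => hessXU f (xs (τ i)) (us (τ i)) (lams (τ i))
    let R : Fin N → Matrix (Fin m) (Fin m) ℝ :=
      fun i => hessUU f (xs (τ i)) (us (τ i)) (lams (τ i))
    let T : Matrix (Fin n) (Fin n) ℝ := hessC C (xs 1)
    let lastN : Fin N := ⟨N - 1, Nat.sub_lt hN one_pos⟩
    ( -- (1)
      fun i => (∑ j, diffMat N σ i j • X j) - (A i).mulVec (X i.succ)
        - (B i).mulVec (U i),
      -- (2)
      X 0,
      -- (3)
      Λ 0 - T.mulVec (X (Fin.last N)) -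
        ∑ i : Fin N, ω i •
          ((A i)ᵀ.mulVec (Λ i.succ) + (Q i).mulVec (X i.succ) + (S i).mulVec (U i)),
      -- (4)
      fun i : Fin (N - 1) =>
        let i' : Fin N := Fin.castLE (Nat.sub_le N 1) i
        (∑ j, ddagMat N σ ω i' j • Λ j.succ) + (A i')ᵀ.mulVec (Λ i'.succ)
          + (Q i').mulVec (X i'.succ) + (S i').mulVec (U i'),
      -- (5)
      (∑ j, ddagMat N σ ω lastN j • Λ j.succ) + (A lastN)ᵀ.mulVec (Λ lastN.succ)
        + (Q lastN).mulVec (X lastN.succ) + (S lastN).mulVec (U lastN)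
        + (1 / ω lastN) • T.mulVec (X (Fin.last N)),
      -- (6)
      fun i => (S i)ᵀ.mulVec (X i.succ) + (R i).mulVec (U i)
        + (B i)ᵀ.mulVec (Λ i.succ) )


namespace GTaux

def dp {k : ℕ} (v w : Fin k → ℝ) : ℝ := ∑ i, v i * w i

lemma dp_comm {k : ℕ} (v w : Fin k → ℝ) : dp v w = dp w v := by
  unfold dp; exact Finset.sum_congr rfl fun i _ => mul_comm _ _

lemma dp_zero_left {k : ℕ} (w : Fin k → ℝ) : dp 0 w = 0 := by simp [dp]

lemma dp_add_right {k : ℕ} (v a b : Fin k → ℝ) : dp v (a + b) = dp v a + dp v b := by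
  simp [dp, mul_add, Finset.sum_add_distrib]

lemma dp_smul_right {k : ℕ} (c : ℝ) (v a : Fin k → ℝ) : dp v (c • a) = c * dp v a := by
  simp [dp, Finset.mul_sum]; exact Finset.sum_congr rfl fun i _ => by ring

lemma dp_sum_right {k N : ℕ} (v : Fin k → ℝ) (c : Fin N → ℝ) (y : Fin N → Fin k → ℝ) :
    dp v (∑ j, c j • y j) = ∑ j, c j * dp v (y j) := by
  simp only [dp, Finset.sum_apply, Pi.smul_apply, smul_eq_mul, Finset.mul_sum]
  rw [Finset.sum_comm]
  exact Finset.sum_congr rfl fun j _ => Finset.sum_congr rfl fun i _ => by ring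

lemma dp_mulVec {k l : ℕ} (v : Fin k → ℝ) (M : Matrix (Fin k) (Fin l) ℝ) (w : Fin l → ℝ) :
    dp v (M.mulVec w) = ∑ a, ∑ b, v a * M a b * w b := by
  simp only [dp, Matrix.mulVec, dotProduct, Finset.mul_sum]
  exact Finset.sum_congr rfl fun a _ => Finset.sum_congr rfl fun b _ => by ring

lemma dp_mulVec_transpose {k l : ℕ} (v : Fin k → ℝ) (M : Matrix (Fin l) (Fin k) ℝ)
    (w : Fin l → ℝ) : dp v (Mᵀ.mulVec w) = dp w (M.mulVec v) := by
  rw [dp_mulVec, dp_mulVec, Finset.sum_comm]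
  exact Finset.sum_congr rfl fun a _ => Finset.sum_congr rfl fun b _ => by
    simp [Matrix.transpose_apply]; ring

lemma sq_sum_pos {k : ℕ} (v : Fin k → ℝ) (h : v ≠ 0) : 0 < ∑ i, v i ^ 2 := by
  rcases Function.ne_iff.mp h with ⟨i, hi⟩
  exact Finset.sum_pos' (fun j _ => sq_nonneg _) ⟨i, Finset.mem_univ i, pow_pos (abs_pos.mpr hi) 2 |>.trans_le (le_of_eq (sq_abs _))⟩

lemma key_inj (n m N : ℕ)
    (E : Matrix (Fin N) (Fin N) ℝ) (ω : Fin N → ℝ) (hω : ∀ i, 0 < ω i)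
    (A Q : Fin N → Matrix (Fin n) (Fin n) ℝ)
    (B S : Fin N → Matrix (Fin n) (Fin m) ℝ)
    (R : Fin N → Matrix (Fin m) (Fin m) ℝ)
    (T : Matrix (Fin n) (Fin n) ℝ)
    (α : ℝ) (hα : 0 < α)
    (hT : ∀ v : Fin n → ℝ, v ≠ 0 → α * (∑ k, v k ^ 2) < ∑ k, ∑ l, v k * T k l * v l)
    (hH : ∀ i, ∀ (v : Fin n → ℝ) (w : Fin m → ℝ), (v, w) ≠ 0 →
      α * ((∑ k, v k ^ 2) + ∑ l, w l ^ 2) <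
        (∑ k, ∑ l, v k * Q i k l * v l) + 2 * (∑ k, ∑ l, v k * S i k l * w l) +
        ∑ k, ∑ l, w k * R i k l * w l)
    (hA : ∀ i, ∀ l, ∑ k, |A i l k| ≤ 1/4)
    (hE : IsUnit E) (hEinv : ∀ i, ∑ j, |E⁻¹ i j| ≤ 2)
    (x lv : Fin N → Fin n → ℝ) (U : Fin N → Fin m → ℝ)
    (lastN : Fin N)
    (h1 : ∀ i, (∑ j, E i j • x j) = (A i).mulVec (x i) + (B i).mulVec (U i))
    (h45 : ∀ i, (∑ j, (-(ω j / ω i) * E j i) • lv j)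
          = -((A i)ᵀ.mulVec (lv i) + (Q i).mulVec (x i) + (S i).mulVec (U i)
          + (if i = lastN then (1 / ω lastN) • T.mulVec (x lastN) else 0)))
    (h6 : ∀ i, (S i)ᵀ.mulVec (x i) + (R i).mulVec (U i) + (B i)ᵀ.mulVec (lv i) = 0) :
    x = 0 ∧ U = 0 ∧ lv = 0 := by
  -- quadratic forms
  set q : Fin N → ℝ := fun i =>
    dp (x i) ((Q i).mulVec (x i)) + 2 * dp (x i) ((S i).mulVec (U i))
      + dp (U i) ((R i).mulVec (U i)) with hq_def
  set c : ℝ := dp (x lastN) (T.mulVec (x lastN)) with hc_def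
  -- summation by parts identity
  have sbp : ∑ i, ω i * dp (x i) (∑ j, (-(ω j / ω i) * E j i) • lv j)
      = -∑ i, ω i * dp (lv i) (∑ j, E i j • x j) := by
    have l1 : ∀ i, ω i * dp (x i) (∑ j, (-(ω j / ω i) * E j i) • lv j)
        = ∑ j, -(ω j * E j i * dp (lv j) (x i)) := by
      intro i
      rw [dp_sum_right, Finset.mul_sum]
      refine Finset.sum_congr rfl fun j _ => ?_
      have hne : ω i ≠ 0 := (hω i).ne'
      rw [dp_comm]
      field_simp
    have l2 : ∀ i, ω i * dp (lv i) (∑ j, E i j • x j)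
        = ∑ j, ω i * E i j * dp (lv i) (x j) := by
      intro i
      rw [dp_sum_right, Finset.mul_sum]
      exact Finset.sum_congr rfl fun j _ => by ring
    calc ∑ i, ω i * dp (x i) (∑ j, (-(ω j / ω i) * E j i) • lv j)
        = ∑ i, ∑ j, -(ω j * E j i * dp (lv j) (x i)) := Finset.sum_congr rfl fun i _ => l1 i
      _ = ∑ j, ∑ i, -(ω j * E j i * dp (lv j) (x i)) := Finset.sum_comm
      _ = -∑ i, ω i * dp (lv i) (∑ j, E i j • x j) := by
          rw [show (-∑ i, ω i * dp (lv i) (∑ j, E i j • x j))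
              = ∑ i, -(ω i * dp (lv i) (∑ j, E i j • x j)) from (Finset.sum_neg_distrib _).symm]
          refine Finset.sum_congr rfl fun j _ => ?_
          rw [l2 j, Finset.sum_neg_distrib]
  -- the main energy identity
  have energy : (∑ i, ω i * q i) + c = 0 := by
    have lhs_eq : ∑ i, ω i * dp (x i) (∑ j, (-(ω j / ω i) * E j i) • lv j)
        = -((∑ i, ω i * (dp (x i) ((A i)ᵀ.mulVec (lv i)) + dp (x i) ((Q i).mulVec (x i))
            + dp (x i) ((S i).mulVec (U i)))) + c) := by
      have : ∀ i, ω i * dp (x i) (∑ j, (-(ω j / ω i) * E j i) • lv j)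
          = -(ω i * (dp (x i) ((A i)ᵀ.mulVec (lv i)) + dp (x i) ((Q i).mulVec (x i))
            + dp (x i) ((S i).mulVec (U i))
            + dp (x i) (if i = lastN then (1 / ω lastN) • T.mulVec (x lastN) else 0))) := by
        intro i
        rw [h45 i]
        have : dp (x i) (-((A i)ᵀ.mulVec (lv i) + (Q i).mulVec (x i) + (S i).mulVec (U i)
            + (if i = lastN then (1 / ω lastN) • T.mulVec (x lastN) else 0)))
            = -(dp (x i) ((A i)ᵀ.mulVec (lv i)) + dp (x i) ((Q i).mulVec (x i))
            + dp (x i) ((S i).mulVec (U i))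
            + dp (x i) (if i = lastN then (1 / ω lastN) • T.mulVec (x lastN) else 0)) := by
          rw [show -((A i)ᵀ.mulVec (lv i) + (Q i).mulVec (x i) + (S i).mulVec (U i)
            + (if i = lastN then (1 / ω lastN) • T.mulVec (x lastN) else 0))
            = (-1 : ℝ) • ((A i)ᵀ.mulVec (lv i) + ((Q i).mulVec (x i) + ((S i).mulVec (U i)
            + (if i = lastN then (1 / ω lastN) • T.mulVec (x lastN) else 0)))) by module]
          rw [dp_smul_right, dp_add_right, dp_add_right, dp_add_right]
          ring
        rw [this]; ring
      rw [Finset.sum_congr rfl fun i _ => this i, Finset.sum_neg_distrib, neg_inj]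
      have hite : ∑ i, ω i * dp (x i)
          (if i = lastN then (1 / ω lastN) • T.mulVec (x lastN) else 0) = c := by
        rw [Finset.sum_eq_single lastN]
        · rw [if_pos rfl, dp_smul_right]
          have hne : ω lastN ≠ 0 := (hω lastN).ne'
          field_simp [hc_def]
          exact hc_def.symm
        · intro i _ hi
          simp [if_neg hi, dp]
        · intro h; exact absurd (Finset.mem_univ lastN) h
      rw [← hite, ← Finset.sum_add_distrib]
      exact Finset.sum_congr rfl fun i _ => by ring
    have rhs_eq : ∑ i, ω i * dp (lv i) (∑ j, E i j • x j)
        = ∑ i, ω i * (dp (x i) ((A i)ᵀ.mulVec (lv i)) - dp (x i) ((S i).mulVec (U i))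
            - dp (U i) ((R i).mulVec (U i))) := by
      refine Finset.sum_congr rfl fun i _ => ?_
      rw [h1 i, dp_add_right]
      have e1 : dp (lv i) ((A i).mulVec (x i)) = dp (x i) ((A i)ᵀ.mulVec (lv i)) :=
        (dp_mulVec_transpose (x i) (A i) (lv i)).symm
      have e2 : dp (lv i) ((B i).mulVec (U i)) = dp (U i) ((B i)ᵀ.mulVec (lv i)) := by
        rw [dp_mulVec_transpose]
      have e3 : (B i)ᵀ.mulVec (lv i) = -((S i)ᵀ.mulVec (x i) + (R i).mulVec (U i)) := by
        have := h6 i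
        linear_combination (norm := module) this
      have e4 : dp (U i) ((B i)ᵀ.mulVec (lv i))
          = -(dp (x i) ((S i).mulVec (U i)) + dp (U i) ((R i).mulVec (U i))) := by
        rw [e3]
        rw [show -((S i)ᵀ.mulVec (x i) + (R i).mulVec (U i))
          = (-1 : ℝ) • ((S i)ᵀ.mulVec (x i) + (R i).mulVec (U i)) by module]
        rw [dp_smul_right, dp_add_right, dp_mulVec_transpose]
        ring
      rw [e1, e2, e4]; ring
    have := sbp
    rw [lhs_eq, rhs_eq] at this
    have expand : ∑ i, ω i * q i
      = (∑ i, ω i * (dp (x i) ((A i)ᵀ.mulVec (lv i)) + dp (x i) ((Q i).mulVec (x i))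
            + dp (x i) ((S i).mulVec (U i))))
        - ∑ i, ω i * (dp (x i) ((A i)ᵀ.mulVec (lv i)) - dp (x i) ((S i).mulVec (U i))
            - dp (U i) ((R i).mulVec (U i))) := by
      rw [← Finset.sum_sub_distrib]
      exact Finset.sum_congr rfl fun i _ => by rw [hq_def]; ring
    rw [expand]
    linarith [this]
  -- nonnegativity and vanishing of x, U
  have hq_eq : ∀ i, q i = (∑ k, ∑ l, x i k * Q i k l * x i l)
      + 2 * (∑ k, ∑ l, x i k * S i k l * U i l)
      + ∑ k, ∑ l, U i k * R i k l * U i l := by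
    intro i
    rw [hq_def]
    simp only [dp_mulVec]
  have hqpos : ∀ i, ¬(x i = 0 ∧ U i = 0) → 0 < q i := by
    intro i hne
    have hvw : (x i, U i) ≠ 0 := by
      rw [Ne, Prod.mk_eq_zero]; exact hne
    have hlt := hH i (x i) (U i) hvw
    rw [← hq_eq i] at hlt
    have hpos : 0 < (∑ k, x i k ^ 2) + ∑ l, U i l ^ 2 := by
      rcases not_and_or.mp hne with h | h
      · have := sq_sum_pos _ h
        have h2 : (0:ℝ) ≤ ∑ l, U i l ^ 2 := Finset.sum_nonneg fun _ _ => sq_nonneg _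
        linarith
      · have := sq_sum_pos _ h
        have h2 : (0:ℝ) ≤ ∑ k, x i k ^ 2 := Finset.sum_nonneg fun _ _ => sq_nonneg _
        linarith
    nlinarith
  have hq_nonneg : ∀ i, 0 ≤ q i := by
    intro i
    by_cases h : x i = 0 ∧ U i = 0
    · have e1 : dp (U i) ((R i).mulVec (U i)) = 0 := by rw [h.2]; exact dp_zero_left _
      have e2 : dp (x i) ((Q i).mulVec (x i)) = 0 := by rw [h.1]; exact dp_zero_left _
      have e3 : dp (x i) ((S i).mulVec (U i)) = 0 := by rw [h.1]; exact dp_zero_left _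
      rw [hq_def]
      simp only []
      rw [e1, e2, e3]
      norm_num
    · exact le_of_lt (hqpos i h)
  have hc_nonneg : 0 ≤ c := by
    by_cases h : x lastN = 0
    · rw [hc_def, h, dp_zero_left]
    · have hlt := hT (x lastN) h
      have hce : c = ∑ k, ∑ l, x lastN k * T k l * x lastN l := by
        rw [hc_def, dp_mulVec]
      rw [hce]
      have hpos : 0 < ∑ k, x lastN k ^ 2 := sq_sum_pos _ h
      nlinarith
  have hsum_nonneg : ∀ i ∈ Finset.univ, 0 ≤ ω i * q i := fun i _ =>
    mul_nonneg (hω i).le (hq_nonneg i)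
  have hsum_zero : ∑ i, ω i * q i = 0 := by
    have h1 : (0:ℝ) ≤ ∑ i, ω i * q i := Finset.sum_nonneg hsum_nonneg
    linarith [energy]
  have hxU : ∀ i, x i = 0 ∧ U i = 0 := by
    intro i
    by_contra h
    have hqi : 0 < ω i * q i := mul_pos (hω i) (hqpos i h)
    have := (Finset.sum_eq_zero_iff_of_nonneg hsum_nonneg).mp hsum_zero i (Finset.mem_univ i)
    linarith
  have hx : ∀ i, x i = 0 := fun i => (hxU i).1
  have hU : ∀ i, U i = 0 := fun i => (hxU i).2
  refine ⟨funext hx, funext hU, ?_⟩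
  -- now the adjoint part: lv = 0
  set μ : Fin N → Fin n → ℝ := fun j => ω j • lv j with hμ_def
  have h45' : ∀ i, ∑ j, (-(ω j / ω i) * E j i) • lv j = -((A i)ᵀ.mulVec (lv i)) := by
    intro i
    rw [h45 i]
    simp [hx, hU, Matrix.mulVec_zero]
  have hμ : ∀ i k, ∑ j, E j i * μ j k = ((A i)ᵀ.mulVec (μ i)) k := by
    intro i k
    have h := congrFun (h45' i) k
    simp only [Finset.sum_apply, Pi.smul_apply, smul_eq_mul, Pi.neg_apply] at h
    have hne : ω i ≠ 0 := (hω i).ne'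
    have key : ∑ j, E j i * μ j k = (-ω i) * ∑ j, -(ω j / ω i) * E j i * lv j k := by
      rw [Finset.mul_sum]
      refine Finset.sum_congr rfl fun j _ => ?_
      simp only [hμ_def, Pi.smul_apply, smul_eq_mul]
      field_simp
    rw [key, h]
    have hAe : ((A i)ᵀ.mulVec (μ i)) k = ω i * ((A i)ᵀ.mulVec (lv i)) k := by
      simp only [hμ_def, Matrix.mulVec, dotProduct, Pi.smul_apply, smul_eq_mul,
        Finset.mul_sum]
      exact Finset.sum_congr rfl fun l _ => by ring
    rw [hAe]
    ring
  have hEE : E * E⁻¹ = 1 := mul_nonsing_inv E ((isUnit_iff_isUnit_det E).mp hE)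
  have hrep : ∀ j0 k, μ j0 k = ∑ i, E⁻¹ i j0 * (((A i)ᵀ.mulVec (μ i)) k) := by
    intro j0 k
    symm
    calc ∑ i, E⁻¹ i j0 * (((A i)ᵀ.mulVec (μ i)) k)
        = ∑ i, E⁻¹ i j0 * ∑ j, E j i * μ j k :=
          Finset.sum_congr rfl fun i _ => by rw [hμ i k]
      _ = ∑ i, ∑ j, E j i * E⁻¹ i j0 * μ j k := by
          refine Finset.sum_congr rfl fun i _ => ?_
          rw [Finset.mul_sum]
          exact Finset.sum_congr rfl fun j _ => by ring
      _ = ∑ j, ∑ i, E j i * E⁻¹ i j0 * μ j k := Finset.sum_comm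
      _ = ∑ j, (E * E⁻¹) j j0 * μ j k := by
          refine Finset.sum_congr rfl fun j _ => ?_
          rw [Matrix.mul_apply, Finset.sum_mul]
      _ = μ j0 k := by
          rw [hEE]
          simp [Matrix.one_apply]
  set s : ℝ := ∑ j, ∑ k, |μ j k| with hs_def
  have hs_nonneg : 0 ≤ s := Finset.sum_nonneg fun j _ =>
    Finset.sum_nonneg fun k _ => abs_nonneg _
  have hg : ∀ i, ∑ k, |((A i)ᵀ.mulVec (μ i)) k| ≤ (1/4) * ∑ l, |μ i l| := by
    intro i
    have step1 : ∀ k, |((A i)ᵀ.mulVec (μ i)) k| ≤ ∑ l, |A i l k| * |μ i l| := by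
      intro k
      have he : ((A i)ᵀ.mulVec (μ i)) k = ∑ l, A i l k * μ i l := by
        simp [Matrix.mulVec, dotProduct, Matrix.transpose_apply]
      rw [he]
      exact (Finset.abs_sum_le_sum_abs _ _).trans (le_of_eq (Finset.sum_congr rfl
        fun l _ => abs_mul _ _))
    calc ∑ k, |((A i)ᵀ.mulVec (μ i)) k| ≤ ∑ k, ∑ l, |A i l k| * |μ i l| :=
          Finset.sum_le_sum fun k _ => step1 k
      _ = ∑ l, |μ i l| * ∑ k, |A i l k| := by
          rw [Finset.sum_comm]
          refine Finset.sum_congr rfl fun l _ => ?_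
          rw [Finset.mul_sum]
          exact Finset.sum_congr rfl fun k _ => by ring
      _ ≤ ∑ l, |μ i l| * (1/4) := Finset.sum_le_sum fun l _ =>
          mul_le_mul_of_nonneg_left (hA i l) (abs_nonneg _)
      _ = (1/4) * ∑ l, |μ i l| := by
          rw [Finset.mul_sum]
          exact Finset.sum_congr rfl fun l _ => by ring
  have hs_half : s ≤ (1/2) * s := by
    have step : s ≤ ∑ i, (∑ j, |E⁻¹ i j|) * (∑ k, |((A i)ᵀ.mulVec (μ i)) k|) := by
      rw [hs_def]
      calc ∑ j, ∑ k, |μ j k|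
          ≤ ∑ j, ∑ k, ∑ i, |E⁻¹ i j| * |((A i)ᵀ.mulVec (μ i)) k| := by
            refine Finset.sum_le_sum fun j _ => Finset.sum_le_sum fun k _ => ?_
            rw [hrep j k]
            exact (Finset.abs_sum_le_sum_abs _ _).trans (le_of_eq (Finset.sum_congr rfl
              fun i _ => abs_mul _ _))
        _ = ∑ j, ∑ i, ∑ k, |E⁻¹ i j| * |((A i)ᵀ.mulVec (μ i)) k| :=
            Finset.sum_congr rfl fun j _ => Finset.sum_comm
        _ = ∑ i, ∑ j, ∑ k, |E⁻¹ i j| * |((A i)ᵀ.mulVec (μ i)) k| := Finset.sum_comm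
        _ = ∑ i, (∑ j, |E⁻¹ i j|) * (∑ k, |((A i)ᵀ.mulVec (μ i)) k|) := by
            refine Finset.sum_congr rfl fun i _ => ?_
            rw [Finset.sum_mul_sum]
    have step2 : ∑ i, (∑ j, |E⁻¹ i j|) * (∑ k, |((A i)ᵀ.mulVec (μ i)) k|)
        ≤ ∑ i, 2 * ((1/4) * ∑ l, |μ i l|) := by
      refine Finset.sum_le_sum fun i _ => ?_
      have h1 : (∑ j, |E⁻¹ i j|) * (∑ k, |((A i)ᵀ.mulVec (μ i)) k|)
          ≤ 2 * (∑ k, |((A i)ᵀ.mulVec (μ i)) k|) :=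
        mul_le_mul_of_nonneg_right (hEinv i)
          (Finset.sum_nonneg fun k _ => abs_nonneg _)
      have h2 : 2 * (∑ k, |((A i)ᵀ.mulVec (μ i)) k|) ≤ 2 * ((1/4) * ∑ l, |μ i l|) := by
        have := hg i
        linarith
      linarith
    have step3 : ∑ i, 2 * ((1/4) * ∑ l, |μ i l|) = (1/2) * s := by
      rw [hs_def, Finset.mul_sum]
      exact Finset.sum_congr rfl fun i _ => by ring
    linarith
  have hs0 : s = 0 := by linarith
  have hμ0 : ∀ j k, μ j k = 0 := by
    intro j k
    have h1 := (Finset.sum_eq_zero_iff_of_nonneg (fun j _ =>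
      Finset.sum_nonneg fun k _ => abs_nonneg (μ j k))).mp hs0 j (Finset.mem_univ j)
    have h2 := (Finset.sum_eq_zero_iff_of_nonneg (fun k _ =>
      abs_nonneg (μ j k))).mp h1 k (Finset.mem_univ k)
    exact abs_eq_zero.mp h2
  funext j k
  have hμjk := hμ0 j k
  simp only [hμ_def, Pi.smul_apply, smul_eq_mul] at hμjk
  have hne : ω j ≠ 0 := (hω j).ne'
  have : lv j k = 0 := by
    rcases mul_eq_zero.mp hμjk with h | h
    · exact absurd h hne
    · exact h
  simpa using this
end GTaux

/-- Suppose `(x*, u*)` is a local minimizer of the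
continuous optimal control problem (P) with costate `λ*`, the coercivity
assumption (A2) and the Jacobian bound (A3) hold, and the Radau quadrature
rule of order `N` satisfies (P1).  Then the linearized KKT map `∇T*` is
invertible (bijective). -/

theorem gradTstar_invertible
    (n m N : ℕ) (hN : 2 ≤ N)
    (f : (Fin n → ℝ) → (Fin m → ℝ) → Fin n → ℝ) (C : (Fin n → ℝ) → ℝ)
    (x0 : Fin n → ℝ)
    (xs : ℝ → Fin n → ℝ) (us : ℝ → Fin m → ℝ) (lams : ℝ → Fin n → ℝ)
    -- smoothness of the data near the solution
    (hf : ∃ Ω : Set ((Fin n → ℝ) × (Fin m → ℝ)), IsOpen Ω ∧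
      (∀ t ∈ Icc (-1:ℝ) 1, (xs t, us t) ∈ Ω) ∧
      ContDiffOn ℝ 2 (fun p : (Fin n → ℝ) × (Fin m → ℝ) => f p.1 p.2) Ω)
    (hC : ∃ V : Set (Fin n → ℝ), IsOpen V ∧ xs 1 ∈ V ∧ ContDiffOn ℝ 2 C V)
    -- (x*, u*) is feasible in (P)
    (hxcont : ContinuousOn xs (Icc (-1:ℝ) 1))
    (hucont : ContinuousOn us (Icc (-1:ℝ) 1))
    (hdyn : ∀ t ∈ Icc (-1:ℝ) 1,
      HasDerivWithinAt xs (f (xs t) (us t)) (Icc (-1:ℝ) 1) t)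
    (hx0 : xs (-1) = x0)
    -- (x*, u*) is a local minimizer of (P) with respect to the sup-norm
    (hmin : ∃ ε > 0, ∀ (x : ℝ → Fin n → ℝ) (u : ℝ → Fin m → ℝ),
      ContinuousOn x (Icc (-1:ℝ) 1) → ContinuousOn u (Icc (-1:ℝ) 1) →
      (∀ t ∈ Icc (-1:ℝ) 1,
        HasDerivWithinAt x (f (x t) (u t)) (Icc (-1:ℝ) 1) t) →
      x (-1) = x0 →
      (∀ t ∈ Icc (-1:ℝ) 1,
        enorm' (x t - xs t) ≤ ε ∧ enorm' (u t - us t) ≤ ε) →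
      C (xs 1) ≤ C (x 1))
    -- λ* solves the costate equation
    (hcostate : ∀ t ∈ Icc (-1:ℝ) 1,
      HasDerivWithinAt lams (-(gradxH f (xs t) (us t) (lams t))) (Icc (-1:ℝ) 1) t)
    (hlam1 : lams 1 = pgrad C (xs 1))
    -- (A2): coercivity
    (α : ℝ) (hα : 0 < α)
    (hA2C : ∀ v : Fin n → ℝ, v ≠ 0 →
      α * (∑ k, v k ^ 2) < ∑ k, ∑ l, v k * hessC C (xs 1) k l * v l)
    (hA2H : ∀ t ∈ Icc (-1:ℝ) 1, ∀ (v : Fin n → ℝ) (w : Fin m → ℝ), (v, w) ≠ 0 →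
      α * ((∑ k, v k ^ 2) + ∑ l, w l ^ 2) <
        (∑ k, ∑ l, v k * hessXX f (xs t) (us t) (lams t) k l * v l) +
        2 * (∑ k, ∑ l, v k * hessXU f (xs t) (us t) (lams t) k l * w l) +
        ∑ k, ∑ l, w k * hessUU f (xs t) (us t) (lams t) k l * w l)
    -- (A3): Jacobian bound in the matrix sup-norm (max absolute row sum)
    (hA3 : ∀ t ∈ Icc (-1:ℝ) 1,
      (∀ k, ∑ l, |jacX f (xs t) (us t) k l| ≤ 1 / 4) ∧
      (∀ l, ∑ k, |jacX f (xs t) (us t) k l| ≤ 1 / 4))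
    -- the Radau quadrature rule of order N and property (P1)
    (τ ω : Fin N → ℝ) (hrad : IsRadauRule N τ ω)
    (hP1 : IsUnit (diffMat1N N (Fin.cons (-1) τ)))
    (hP1norm : ∀ i : Fin N, ∑ j, |(diffMat1N N (Fin.cons (-1) τ))⁻¹ i j| ≤ 2) :
    Function.Bijective (gradTstar n m N (by omega) f C xs us lams τ ω) := by
  classical
  have hN0 : 0 < N := by omega
  obtain ⟨hτmono, hτlb, hτub, hτtop, hωpos, hquad⟩ := hrad
  have hτmem : ∀ i, τ i ∈ Icc (-1:ℝ) 1 := fun i => ⟨(hτlb i).le, hτub i⟩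
  set Fm := gradTstar n m N hN0 f C xs us lams τ ω with hFm
  have hadd : ∀ a b, Fm (a + b) = Fm a + Fm b := by
    rintro ⟨X, U, L⟩ ⟨X', U', L'⟩
    simp only [hFm, gradTstar, Prod.mk_add_mk, Prod.mk.injEq]
    refine ⟨?_, ?_, ?_, ?_, ?_, ?_⟩ <;>
    · first
      | (funext i k
         simp only [Pi.add_apply, Pi.sub_apply, Pi.neg_apply, Finset.sum_apply, Pi.smul_apply, smul_eq_mul,
           Matrix.mulVec, dotProduct, mul_add, Finset.sum_add_distrib]
         try ring)
      | (funext k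
         simp only [Pi.add_apply, Pi.sub_apply, Pi.neg_apply, Finset.sum_apply, Pi.smul_apply, smul_eq_mul,
           Matrix.mulVec, dotProduct, mul_add, Finset.sum_add_distrib]
         try ring)
  have hsmul : ∀ (c : ℝ) a, Fm (c • a) = c • Fm a := by
    rintro c ⟨X, U, L⟩
    simp only [hFm, gradTstar, Prod.smul_mk, Prod.mk.injEq]
    refine ⟨?_, ?_, ?_, ?_, ?_, ?_⟩ <;>
    · first
      | (funext i k
         simp only [Pi.smul_apply, Pi.sub_apply, Pi.add_apply, Pi.neg_apply, Finset.sum_apply, smul_eq_mul,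
           Matrix.mulVec, dotProduct, mul_add, mul_sub, mul_neg, sub_eq_add_neg, neg_add,
           Finset.mul_sum, Finset.sum_add_distrib]
         try simp only [mul_comm, mul_assoc, mul_left_comm]
         try ring)
      | (funext k
         simp only [Pi.smul_apply, Pi.sub_apply, Pi.add_apply, Pi.neg_apply, Finset.sum_apply, smul_eq_mul,
           Matrix.mulVec, dotProduct, mul_add, mul_sub, mul_neg, sub_eq_add_neg, neg_add,
           Finset.mul_sum, Finset.sum_add_distrib]
         try simp only [mul_comm, mul_assoc, mul_left_comm]
         try ring)
  have hker : ∀ z, Fm z = 0 → z = 0 := by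
    rintro ⟨X, U, L⟩ hz
    simp only [hFm, gradTstar, Prod.mk_eq_zero] at hz
    obtain ⟨h1, h2, h3, h4, h5, h6⟩ := hz
    set σ : Fin (N + 1) → ℝ := Fin.cons (-1) τ with hσdef
    set lastN : Fin N := ⟨N - 1, Nat.sub_lt hN0 one_pos⟩ with hlastdef
    have hls : lastN.succ = Fin.last N := by
      apply Fin.ext
      simp only [Fin.val_succ, Fin.val_last, hlastdef, Fin.val_mk]
      omega
    have hdd : ∀ i j, ddagMat N σ ω i j = -(ω j / ω i) * diffMat1N N σ j i :=
      fun _ _ => rfl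
    have hd1 : ∀ (i : Fin N) (j : Fin N), diffMat N σ i j.succ = diffMat1N N σ i j :=
      fun _ _ => rfl
    have h1' : ∀ i, ∑ j : Fin N, diffMat1N N σ i j • X j.succ
        = jacX f (xs (τ i)) (us (τ i)) *ᵥ X i.succ
          + jacU f (xs (τ i)) (us (τ i)) *ᵥ U i := by
      intro i
      have h := congrFun h1 i
      simp only [Pi.zero_apply] at h
      rw [Fin.sum_univ_succ, h2] at h
      simp only [smul_zero, zero_add, hd1] at h
      linear_combination (norm := module) h
    have h45' : ∀ i, ∑ j : Fin N, (-(ω j / ω i) * diffMat1N N σ j i) • L j.succ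
        = -((jacX f (xs (τ i)) (us (τ i)))ᵀ *ᵥ L i.succ
          + hessXX f (xs (τ i)) (us (τ i)) (lams (τ i)) *ᵥ X i.succ
          + hessXU f (xs (τ i)) (us (τ i)) (lams (τ i)) *ᵥ U i
          + (if i = lastN then (1 / ω lastN) • hessC C (xs 1) *ᵥ X lastN.succ else 0)) := by
      intro i
      by_cases hi : i = lastN
      · rw [hi, if_pos rfl]
        have h := h5
        rw [← hls] at h
        simp only [hdd] at h
        linear_combination (norm := module) h
      · rw [if_neg hi]
        have hi' : (i : ℕ) < N - 1 := by
          have hil := i.isLt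
          have hlval : (lastN : ℕ) = N - 1 := rfl
          by_contra hcon
          push_neg at hcon
          exact hi (Fin.ext (by omega))
        have h := congrFun h4 ⟨(i : ℕ), hi'⟩
        simp only [Pi.zero_apply] at h
        have hcast : Fin.castLE (Nat.sub_le N 1) (⟨(i : ℕ), hi'⟩ : Fin (N - 1)) = i :=
          Fin.ext rfl
        rw [hcast] at h
        simp only [hdd] at h
        linear_combination (norm := module) h
    have h6' : ∀ i, (hessXU f (xs (τ i)) (us (τ i)) (lams (τ i)))ᵀ *ᵥ X i.succ
        + hessUU f (xs (τ i)) (us (τ i)) (lams (τ i)) *ᵥ U i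
        + (jacU f (xs (τ i)) (us (τ i)))ᵀ *ᵥ L i.succ = 0 := fun i => congrFun h6 i ▸ rfl
    obtain ⟨hx0, hU0, hlv0⟩ := GTaux.key_inj n m N (diffMat1N N σ) ω hωpos
      (fun i => jacX f (xs (τ i)) (us (τ i)))
      (fun i => hessXX f (xs (τ i)) (us (τ i)) (lams (τ i)))
      (fun i => jacU f (xs (τ i)) (us (τ i)))
      (fun i => hessXU f (xs (τ i)) (us (τ i)) (lams (τ i)))
      (fun i => hessUU f (xs (τ i)) (us (τ i)) (lams (τ i)))
      (hessC C (xs 1)) α hα hA2C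
      (fun i => hA2H (τ i) (hτmem i))
      (fun i => (hA3 (τ i) (hτmem i)).1)
      hP1 hP1norm
      (fun j => X j.succ) (fun j => L j.succ) U lastN h1' h45' h6'
    have hXs : ∀ j : Fin N, X j.succ = 0 := fun j => congrFun hx0 j
    have hLs : ∀ j : Fin N, L j.succ = 0 := fun j => congrFun hlv0 j
    have hUs : U = 0 := hU0
    have hXall : X = 0 := by
      funext j
      refine Fin.cases ?_ ?_ j
      · exact h2
      · exact hXs
    have hL0 : L 0 = 0 := by
      have h := h3
      rw [← hls] at h
      simp only [hXall, hUs, hXs, hLs, Pi.zero_apply, Matrix.mulVec_zero, smul_zero,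
        add_zero, zero_add, sub_zero, Finset.sum_const_zero] at h
      exact h
    have hLall : L = 0 := by
      funext j
      refine Fin.cases ?_ ?_ j
      · exact hL0
      · exact hLs
    rw [Prod.mk_eq_zero, Prod.mk_eq_zero]
    exact ⟨hXall, hUs, hLall⟩
  let L : ((Fin (N + 1) → Fin n → ℝ) × (Fin N → Fin m → ℝ) × (Fin (N + 1) → Fin n → ℝ))
      →ₗ[ℝ] ((Fin N → Fin n → ℝ) × (Fin n → ℝ) × (Fin n → ℝ) ×
      (Fin (N - 1) → Fin n → ℝ) × (Fin n → ℝ) × (Fin N → Fin m → ℝ)) :=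
    { toFun := Fm
      map_add' := hadd
      map_smul' := fun c a => by simpa using hsmul c a }
  have hinj : Function.Injective L := by
    rw [injective_iff_map_eq_zero]
    intro a ha
    exact hker a ha
  have hrank : Module.finrank ℝ ((Fin (N + 1) → Fin n → ℝ) × (Fin N → Fin m → ℝ)
        × (Fin (N + 1) → Fin n → ℝ))
      = Module.finrank ℝ ((Fin N → Fin n → ℝ) × (Fin n → ℝ) × (Fin n → ℝ) ×
        (Fin (N - 1) → Fin n → ℝ) × (Fin n → ℝ) × (Fin N → Fin m → ℝ)) := by
    obtain ⟨N', rfl⟩ : ∃ N', N = N' + 1 := ⟨N - 1, by omega⟩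
    simp [Module.finrank_prod, Module.finrank_pi_fintype]
    ring
  have hsurj : Function.Surjective L :=
    (LinearMap.injective_iff_surjective_of_finrank_eq_finrank hrank).mp hinj
  exact ⟨hinj, hsurj⟩
end
end

section
/- Let N ≥ 2, let ω_1,…,ω_N > 0 with W = diag(ω_1,…,ω_N), and let M be an invertible N×N real matrix such that each row of (W^{1/2} M)^{-1} has Euclidean norm at most √2. Let B be the block diagonal matrix with diagonal blocks B_1,…,B_N ∈ ℝ^{n×m}, and let U = (U_1,…,U_N) with U_i ∈ ℝ^m. Then each block component of (M^{-1} ⊗ I_n) B U has Euclidean norm at most √2 · (max_{1≤i≤N} ‖B_i‖₂) · ‖U‖_ω, where ‖B_i‖₂ is the spectral norm and ‖U‖_ω² = Σ_{i=1}^{N} ω_i |U_i|² with |·| the Euclidean norm. -/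
open Matrix Kronecker

noncomputable section

/-- Spectral norm (ℓ²-operator norm) of a rectangular real matrix. -/
def specNorm {a b : ℕ} (B : Matrix (Fin a) (Fin b) ℝ) : ℝ :=
  ‖LinearMap.toContinuousLinearMap (Matrix.toEuclideanLin B)‖

/-- The block diagonal matrix with diagonal blocks `B 0, …, B (N-1)`
(block index listed first). -/
def blockDiag (N n m : ℕ) (B : Fin N → Matrix (Fin n) (Fin m) ℝ) :
    Matrix (Fin N × Fin n) (Fin N × Fin m) ℝ :=
  fun p q => if p.1 = q.1 then B p.1 p.2 q.2 else 0

lemma enorm'_eq {k : ℕ} (v : Fin k → ℝ) :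
    enorm' v = ‖(WithLp.equiv 2 (Fin k → ℝ)).symm v‖ := by
  rw [EuclideanSpace.norm_eq]; simp [enorm', Real.norm_eq_abs, sq_abs]

lemma mulVec_enorm_le {a b : ℕ} (B : Matrix (Fin a) (Fin b) ℝ) (u : Fin b → ℝ) :
    enorm' (B *ᵥ u) ≤ specNorm B * enorm' u := by
  rw [enorm'_eq, enorm'_eq]
  have := (LinearMap.toContinuousLinearMap (Matrix.toEuclideanLin B)).le_opNorm
    ((WithLp.equiv 2 (Fin b → ℝ)).symm u)
  simpa [specNorm] using this

lemma enorm'_nonneg {k : ℕ} (v : Fin k → ℝ) : 0 ≤ enorm' v := Real.sqrt_nonneg _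

/-- Let `ω_i > 0` with `W = diag(ω)`, and let `M` be an
invertible `N×N` matrix such that each row of `(W^{1/2} M)⁻¹` has Euclidean
norm at most `√2`.  Then each block component of `(M⁻¹ ⊗ I_n) B U`, for `B`
block diagonal with blocks `B_i`, is bounded in Euclidean norm by
`√2 ⋅ (max_i ‖B_i‖₂) ⋅ ‖U‖_ω`. -/
theorem kronecker_block_bound
    (N n m : ℕ) (hN : 2 ≤ N) (ω : Fin N → ℝ) (hω : ∀ i, 0 < ω i)
    (M : Matrix (Fin N) (Fin N) ℝ) (hMinv : IsUnit M)
    (hrow : ∀ i : Fin N,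
      enorm' (fun j => (Matrix.diagonal (fun k => Real.sqrt (ω k)) * M)⁻¹ i j) ≤
        Real.sqrt 2)
    (B : Fin N → Matrix (Fin n) (Fin m) ℝ)
    (U : Fin N → Fin m → ℝ) :
    ∀ i : Fin N,
      enorm' (fun k : Fin n =>
        ((M⁻¹ ⊗ₖ (1 : Matrix (Fin n) (Fin n) ℝ)).mulVec
          ((blockDiag N n m B).mulVec (fun q => U q.1 q.2))) (i, k)) ≤
      Real.sqrt 2 * (⨆ j, specNorm (B j)) *
        Real.sqrt (∑ j, ω j * ∑ l, (U j l) ^ 2) := by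
  intro i
  have : Nonempty (Fin N) := ⟨⟨0, by omega⟩⟩
  set D : Matrix (Fin N) (Fin N) ℝ := Matrix.diagonal (fun k => Real.sqrt (ω k)) with hD
  set A : Matrix (Fin N) (Fin N) ℝ := (D * M)⁻¹ with hA
  -- M⁻¹ = A * D
  have hDdet : IsUnit D.det := by
    rw [hD, Matrix.det_diagonal]
    exact (Finset.prod_pos (fun j _ => Real.sqrt_pos.2 (hω j))).ne'.isUnit
  have hMA : M⁻¹ = A * D := by
    rw [hA, Matrix.mul_inv_rev, Matrix.mul_assoc,
      Matrix.nonsing_inv_mul D hDdet, Matrix.mul_one]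
  have hMent : ∀ j, M⁻¹ i j = A i j * Real.sqrt (ω j) := by
    intro j
    rw [hMA]
    simp [hD, Matrix.mul_apply, Matrix.diagonal, Finset.sum_ite_eq]
  -- the block component as a sum
  have hvec : (fun k : Fin n =>
      ((M⁻¹ ⊗ₖ (1 : Matrix (Fin n) (Fin n) ℝ)).mulVec
        ((blockDiag N n m B).mulVec (fun q => U q.1 q.2))) (i, k))
      = ∑ j, M⁻¹ i j • ((B j) *ᵥ (U j)) := by
    funext k
    simp [Matrix.mulVec, dotProduct, _root_.blockDiag, Fintype.sum_prod_type,
      Matrix.one_apply, Finset.mul_sum, ite_and, mul_ite, mul_assoc,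
      Finset.sum_apply]
  rw [hvec]
  -- supremum facts
  set spec : ℝ := ⨆ j, specNorm (B j) with hspec
  have hbdd : BddAbove (Set.range fun j => specNorm (B j)) :=
    Set.Finite.bddAbove (Set.finite_range _)
  have hspec_le : ∀ j, specNorm (B j) ≤ spec := fun j => le_ciSup hbdd j
  have hspec0 : 0 ≤ spec := le_trans (norm_nonneg _) (hspec_le ⟨0, by omega⟩)
  -- triangle inequality
  have htri : enorm' (∑ j, M⁻¹ i j • ((B j) *ᵥ (U j)))
      ≤ ∑ j, |M⁻¹ i j| * enorm' ((B j) *ᵥ (U j)) := by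
    rw [enorm'_eq]
    have : ((WithLp.equiv 2 (Fin n → ℝ)).symm (∑ j, M⁻¹ i j • ((B j) *ᵥ (U j))))
        = ∑ j, M⁻¹ i j • ((WithLp.equiv 2 (Fin n → ℝ)).symm ((B j) *ᵥ (U j))) := by
      apply map_sum (WithLp.linearEquiv 2 ℝ (Fin n → ℝ)).symm
        (fun j => M⁻¹ i j • ((B j) *ᵥ (U j))) Finset.univ |>.trans
      exact Finset.sum_congr rfl fun j _ =>
        map_smul (WithLp.linearEquiv 2 ℝ (Fin n → ℝ)).symm _ _
    rw [this]
    refine (norm_sum_le _ _).trans (le_of_eq ?_)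
    refine Finset.sum_congr rfl fun j _ => ?_
    rw [norm_smul, Real.norm_eq_abs, enorm'_eq]
  refine htri.trans ?_
  -- bound each term
  have hterm : ∀ j, |M⁻¹ i j| * enorm' ((B j) *ᵥ (U j))
      ≤ spec * (|A i j| * (Real.sqrt (ω j) * enorm' (U j))) := by
    intro j
    have h1 : |M⁻¹ i j| = |A i j| * Real.sqrt (ω j) := by
      rw [hMent j, abs_mul, abs_of_nonneg (Real.sqrt_nonneg _)]
    rw [h1]
    have h2 : enorm' ((B j) *ᵥ (U j)) ≤ spec * enorm' (U j) :=
      (mulVec_enorm_le _ _).trans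
        (mul_le_mul_of_nonneg_right (hspec_le j) (enorm'_nonneg _))
    calc |A i j| * Real.sqrt (ω j) * enorm' ((B j) *ᵥ (U j))
        ≤ |A i j| * Real.sqrt (ω j) * (spec * enorm' (U j)) := by
          apply mul_le_mul_of_nonneg_left h2 (by positivity)
      _ = spec * (|A i j| * (Real.sqrt (ω j) * enorm' (U j))) := by ring
  refine (Finset.sum_le_sum fun j _ => hterm j).trans ?_
  rw [← Finset.mul_sum]
  -- Cauchy-Schwarz
  have hCS : ∑ j, |A i j| * (Real.sqrt (ω j) * enorm' (U j))
      ≤ Real.sqrt 2 * Real.sqrt (∑ j, ω j * ∑ l, (U j l) ^ 2) := by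
    have := Real.sum_mul_le_sqrt_mul_sqrt Finset.univ
      (fun j => |A i j|) (fun j => Real.sqrt (ω j) * enorm' (U j))
    refine this.trans ?_
    have e1 : Real.sqrt (∑ j, |A i j| ^ 2) ≤ Real.sqrt 2 := by
      simpa [enorm', sq_abs] using hrow i
    have e2 : Real.sqrt (∑ j, (Real.sqrt (ω j) * enorm' (U j)) ^ 2)
        = Real.sqrt (∑ j, ω j * ∑ l, (U j l) ^ 2) := by
      congr 1
      refine Finset.sum_congr rfl fun j _ => ?_
      rw [mul_pow, Real.sq_sqrt (hω j).le, enorm',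
        Real.sq_sqrt (Finset.sum_nonneg fun l _ => sq_nonneg _)]
    rw [e2]
    exact mul_le_mul_of_nonneg_right e1 (Real.sqrt_nonneg _)
  calc spec * ∑ j, |A i j| * (Real.sqrt (ω j) * enorm' (U j))
      ≤ spec * (Real.sqrt 2 * Real.sqrt (∑ j, ω j * ∑ l, (U j l) ^ 2)) :=
        mul_le_mul_of_nonneg_left hCS hspec0
    _ = Real.sqrt 2 * spec * Real.sqrt (∑ j, ω j * ∑ l, (U j l) ^ 2) := by ring
end
end
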